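/- arXiv:0806.3990 — 2 statements merged into one kernel-verified Lean document; each statement's English description precedes it below -/
import Mathlib

section
/- There exists an absolute constant C > 0 such that for all sufficiently large positive integers k and every positive integer m, \int_0^1 (\sin(\pi m t)/\sin(\pi t))^{2k} dt \ge C m^{2k-1}/\sqrt{k}. -/
open Real intervalIntegral

lemma abs_sin_nat_mul_le (n : ℕ) (x : ℝ) : |Real.sin (n * x)| ≤ n * |Real.sin x| := by
  induction n with
  | zero => simp
  | succ n ih =>
    have h : ((n : ℝ) + 1) * x = n * x + x := by ring
    push_cast
    rw [h, Real.sin_add]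
    calc |Real.sin (n*x) * Real.cos x + Real.cos (n*x) * Real.sin x|
        ≤ |Real.sin (n*x) * Real.cos x| + |Real.cos (n*x) * Real.sin x| := abs_add_le _ _
      _ ≤ |Real.sin (n*x)| * 1 + 1 * |Real.sin x| := by
          rw [abs_mul, abs_mul]
          gcongr
          · exact Real.abs_cos_le_one _
          · exact Real.abs_cos_le_one _
      _ ≤ (n : ℝ) * |Real.sin x| + 1 * |Real.sin x| := by
          rw [mul_one]; gcongr
      _ = ((n : ℝ) + 1) * |Real.sin x| := by ring

set_option maxHeartbeats 1000000 in
theorem fejer_integral_lower_bound :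
    ∃ C : ℝ, 0 < C ∧ ∃ k₀ : ℕ, ∀ k : ℕ, k₀ ≤ k → ∀ m : ℕ, 0 < m →
      C * (m : ℝ) ^ (2 * k - 1) / Real.sqrt k ≤
        ∫ t in (0:ℝ)..1, (Real.sin (Real.pi * m * t) / Real.sin (Real.pi * t)) ^ (2 * k) := by
  refine ⟨1 / (4 * Real.pi), by positivity, 1, fun k hk m hm => ?_⟩
  set f : ℝ → ℝ := fun t => (Real.sin (Real.pi * m * t) / Real.sin (Real.pi * t)) ^ (2 * k)
    with hf
  have hk1 : (1 : ℝ) ≤ k := by exact_mod_cast hk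
  have hkpos : (0 : ℝ) < k := by linarith
  have hsk : (1 : ℝ) ≤ Real.sqrt k := by
    rw [show (1:ℝ) = Real.sqrt 1 by simp]; exact Real.sqrt_le_sqrt hk1
  have hskpos : (0 : ℝ) < Real.sqrt k := by linarith
  have hm1 : (1 : ℝ) ≤ m := by exact_mod_cast hm
  have hmpos : (0 : ℝ) < m := by linarith
  set b : ℝ := 1 / (Real.pi * m * Real.sqrt k) with hb
  have hbpos : 0 < b := by positivity
  have hble : b ≤ 1 / Real.pi := by
    rw [hb]
    apply div_le_div_of_nonneg_left one_pos.le Real.pi_pos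
    nlinarith [Real.pi_pos, mul_le_mul hm1 hsk one_pos.le hmpos.le]
  have hb1 : b ≤ 1 := le_trans hble (by
    rw [div_le_one Real.pi_pos]; linarith [Real.pi_gt_three])
  have hk4 : 1/(4*(k:ℝ)) ≤ 1/4 := by
    apply div_le_div_of_nonneg_left one_pos.le (by norm_num); linarith
  -- pointwise bound on [b/2, b]
  have hptwise : ∀ t ∈ Set.Icc (b/2) b, (m : ℝ) ^ (2*k) * (1/2) ≤ f t := by
    intro t ht
    obtain ⟨ht1, ht2⟩ := ht
    have htpos : 0 < t := lt_of_lt_of_le (by linarith) ht1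
    have hx : 0 < Real.pi * m * t := by positivity
    have hxle : Real.pi * m * t ≤ 1 / Real.sqrt k := by
      have hbb : Real.pi * m * b = 1 / Real.sqrt k := by
        rw [hb]; field_simp
      calc Real.pi * m * t ≤ Real.pi * m * b := by gcongr
        _ = 1 / Real.sqrt k := hbb
    have hxle1 : Real.pi * m * t ≤ 1 := le_trans hxle (by
      rw [div_le_one hskpos]; exact hsk)
    have hx2 : (Real.pi * m * t)^2 ≤ 1 / k := by
      have h1 : (Real.pi * m * t)^2 ≤ (1 / Real.sqrt k)^2 := by
        apply sq_le_sq' <;> nlinarith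
      rwa [div_pow, one_pow, Real.sq_sqrt hkpos.le] at h1
    have hsin_den_pos : 0 < Real.sin (Real.pi * t) := by
      apply Real.sin_pos_of_pos_of_lt_pi (by positivity)
      calc Real.pi * t ≤ Real.pi * b := by gcongr
        _ ≤ Real.pi * (1 / Real.pi) := by gcongr
        _ = 1 := by field_simp
        _ < Real.pi := by linarith [Real.pi_gt_three]
    have hsin_den_le : Real.sin (Real.pi * t) ≤ Real.pi * t :=
      (Real.sin_lt (by positivity)).le
    have hcube : (Real.pi * m * t)^2 / 4 ≤ 1/(4*(k:ℝ)) := by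
      calc (Real.pi * m * t)^2 / 4 ≤ (1/(k:ℝ)) / 4 := by gcongr
        _ = 1/(4*(k:ℝ)) := by ring
    have hsin_num : Real.pi * m * t * (1 - 1/(4*(k:ℝ))) ≤ Real.sin (Real.pi * m * t) := by
      have h3 := Real.sin_gt_sub_cube hx
      nlinarith [mul_le_mul_of_nonneg_left hcube hx.le, pow_pos hx 3]
    have hratio : (m : ℝ) * (1 - 1/(4*(k:ℝ))) ≤
        Real.sin (Real.pi * m * t) / Real.sin (Real.pi * t) := by
      rw [le_div_iff₀ hsin_den_pos]
      calc (m : ℝ) * (1 - 1/(4*(k:ℝ))) * Real.sin (Real.pi * t)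
          ≤ (m : ℝ) * (1 - 1/(4*(k:ℝ))) * (Real.pi * t) := by
            apply mul_le_mul_of_nonneg_left hsin_den_le
            have h4 : (0:ℝ) ≤ 1 - 1/(4*(k:ℝ)) := by linarith
            positivity
        _ = Real.pi * m * t * (1 - 1/(4*(k:ℝ))) := by ring
        _ ≤ Real.sin (Real.pi * m * t) := hsin_num
    have hbase_nonneg : 0 ≤ (m : ℝ) * (1 - 1/(4*(k:ℝ))) := by nlinarith
    have hpow : ((m : ℝ) * (1 - 1/(4*(k:ℝ))))^(2*k) ≤ f t :=
      pow_le_pow_left₀ hbase_nonneg hratio _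
    refine le_trans ?_ hpow
    rw [mul_pow]
    apply mul_le_mul_of_nonneg_left _ (by positivity : (0:ℝ) ≤ (m:ℝ)^(2*k))
    · -- Bernoulli
      have hber : 1 + (2*k : ℕ) * (-(1/(4*(k:ℝ)))) ≤ (1 + (-(1/(4*(k:ℝ)))))^(2*k) := by
        apply one_add_mul_le_pow; linarith
      have heq : (1:ℝ) + (2*k : ℕ) * (-(1/(4*(k:ℝ)))) = 1/2 := by
        push_cast; field_simp; ring
      calc (1:ℝ)/2 = 1 + (2*k : ℕ) * (-(1/(4*(k:ℝ)))) := heq.symm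
        _ ≤ (1 + (-(1/(4*(k:ℝ)))))^(2*k) := hber
        _ = (1 - 1/(4*(k:ℝ)))^(2*k) := by ring_nf
  -- integrability of f on [0,1]
  have hmeas : Measurable f := by
    apply Measurable.pow_const
    exact ((Real.continuous_sin.comp (continuous_const.mul continuous_id)).measurable).div
      ((Real.continuous_sin.comp (continuous_const.mul continuous_id)).measurable)
  have hfnonneg : ∀ t : ℝ, 0 ≤ f t := by
    intro t; exact (even_two_mul k).pow_nonneg _
  have hbound : ∀ t : ℝ, f t ≤ (m:ℝ)^(2*k) := by
    intro t
    rw [hf]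
    simp only
    by_cases hden : Real.sin (Real.pi * t) = 0
    · rw [hden, div_zero, zero_pow (by omega)]
      positivity
    · have habs : |Real.sin (Real.pi * m * t) / Real.sin (Real.pi * t)| ≤ m := by
        rw [abs_div, div_le_iff₀ (abs_pos.mpr hden)]
        have h5 : Real.pi * m * t = m * (Real.pi * t) := by ring
        rw [h5]
        exact abs_sin_nat_mul_le m _
      calc (Real.sin (Real.pi * m * t) / Real.sin (Real.pi * t)) ^ (2*k)
          ≤ |(Real.sin (Real.pi * m * t) / Real.sin (Real.pi * t)) ^ (2*k)| := le_abs_self _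
        _ = |Real.sin (Real.pi * m * t) / Real.sin (Real.pi * t)| ^ (2*k) := (pow_abs _ _).symm
        _ ≤ (m:ℝ)^(2*k) := pow_le_pow_left₀ (abs_nonneg _) habs _
  have hint : IntervalIntegrable f MeasureTheory.volume 0 1 := by
    apply IntervalIntegrable.mono_fun (_root_.intervalIntegrable_const (c := (m:ℝ)^(2*k)))
      hmeas.aestronglyMeasurable
    filter_upwards with t
    rw [Real.norm_eq_abs, Real.norm_eq_abs, abs_of_nonneg (hfnonneg t),
      abs_of_nonneg (by positivity)]
    exact hbound t
  -- main chain
  have hsub : ∫ t in (b/2)..b, f t ≤ ∫ t in (0:ℝ)..1, f t := by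
    apply integral_mono_interval (by linarith : (0:ℝ) ≤ b/2) (by linarith : b/2 ≤ b) hb1
    · filter_upwards with t using hfnonneg t
    · exact hint
  have hint' : IntervalIntegrable f MeasureTheory.volume (b/2) b := by
    apply hint.mono_set
    apply Set.uIcc_subset_uIcc <;> rw [Set.mem_uIcc] <;> left <;> constructor <;> linarith
  have hconst : (b - b/2) * ((m:ℝ)^(2*k) * (1/2)) ≤ ∫ t in (b/2)..b, f t := by
    have h6 := intervalIntegral.integral_mono_on (by linarith : b/2 ≤ b)
      (_root_.intervalIntegrable_const (c := (m:ℝ)^(2*k) * (1/2))) hint' hptwise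
    rwa [intervalIntegral.integral_const, smul_eq_mul] at h6
  have hfinal : 1 / (4 * Real.pi) * (m : ℝ) ^ (2 * k - 1) / Real.sqrt k
      = (b - b/2) * ((m:ℝ)^(2*k) * (1/2)) := by
    have hm2k : (m:ℝ)^(2*k) = (m:ℝ)^(2*k-1) * m := by
      rw [← pow_succ]; congr 1; omega
    rw [hm2k, hb]
    field_simp [Real.pi_ne_zero, hmpos.ne', hskpos.ne']
    ring
  rw [hfinal]
  exact le_trans hconst hsub
end

section
/- For every real r with 0 < r < 2 and r \ne 1, and every real x, |x|^r = (1/K(r)) \int_{-\infty}^{\infty} \sin^2(xt/2) / |t|^{r+1} dt, where K(r) = (\Gamma(2-r)/(r(1-r))) \sin((1-r)\pi/2). -/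
open MeasureTheory Real Set Filter

namespace LevyRep

lemma one_sub_cos_eq (t : ℝ) : 1 - Real.cos t = 2 * Real.sin (t / 2) ^ 2 := by
  have h := Real.sin_sq_eq_half_sub (t / 2)
  rw [show 2 * (t / 2) = t by ring] at h
  linarith

lemma one_sub_cos_nonneg (t : ℝ) : 0 ≤ 1 - Real.cos t := by
  have := Real.cos_le_one t; linarith

lemma one_sub_cos_le_two (t : ℝ) : 1 - Real.cos t ≤ 2 := by
  have := Real.neg_one_le_cos t; linarith

lemma one_sub_cos_le_sq (t : ℝ) : 1 - Real.cos t ≤ t ^ 2 := by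
  rw [one_sub_cos_eq]
  have h : Real.sin (t / 2) ^ 2 ≤ (t / 2) ^ 2 := Real.sin_sq_le_sq
  nlinarith

lemma integrableOn_aux (r : ℝ) (hr0 : 0 < r) (hr2 : r < 2) :
    IntegrableOn (fun t : ℝ => (1 - Real.cos t) / t ^ (r + 1)) (Ioi 0) := by
  have hmeas : ∀ s : Set ℝ,
      AEStronglyMeasurable (fun t : ℝ => (1 - Real.cos t) / t ^ (r + 1)) (volume.restrict s) :=
    fun s => ((measurable_const.sub Real.measurable_cos).div
      (measurable_id.pow_const (r + 1))).aestronglyMeasurable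
  rw [← Ioc_union_Ioi_eq_Ioi (zero_le_one' ℝ)]
  refine IntegrableOn.union ?_ ?_
  · refine Integrable.mono' (g := fun t : ℝ => t ^ (1 - r)) ?_ (hmeas _) ?_
    · have : IntegrableOn (fun t : ℝ => t ^ (1 - r)) (Ioc (0:ℝ) 1) := by
        rw [integrableOn_Ioc_iff_integrableOn_Ioo]
        exact (intervalIntegral.integrableOn_Ioo_rpow_iff one_pos).mpr (by linarith)
      exact this
    · refine (ae_restrict_iff' measurableSet_Ioc).mpr (ae_of_all _ fun t ht => ?_)
      obtain ⟨ht0, ht1⟩ := ht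
      show ‖(1 - Real.cos t) / t ^ (r + 1)‖ ≤ t ^ (1 - r)
      have htp : (0:ℝ) < t ^ (r + 1) := Real.rpow_pos_of_pos ht0 _
      rw [Real.norm_eq_abs, abs_div, abs_of_nonneg (one_sub_cos_nonneg t), abs_of_pos htp,
        div_le_iff₀ htp]
      calc 1 - Real.cos t ≤ t ^ 2 := one_sub_cos_le_sq t
        _ = t ^ ((1 - r) + (r + 1)) := by
            rw [show (1 - r) + (r + 1) = ((2:ℕ):ℝ) by push_cast; ring, Real.rpow_natCast]
        _ = t ^ (1 - r) * t ^ (r + 1) := Real.rpow_add ht0 _ _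
  · refine Integrable.mono' (g := fun t : ℝ => 2 * t ^ (-(r + 1))) ?_ (hmeas _) ?_
    · exact (integrableOn_Ioi_rpow_of_lt (by linarith) one_pos).const_mul 2
    · refine (ae_restrict_iff' measurableSet_Ioi).mpr (ae_of_all _ fun t ht => ?_)
      have ht0 : (0:ℝ) < t := lt_trans one_pos ht
      have htp : (0:ℝ) < t ^ (r + 1) := Real.rpow_pos_of_pos ht0 _
      show ‖(1 - Real.cos t) / t ^ (r + 1)‖ ≤ 2 * t ^ (-(r + 1))
      rw [Real.norm_eq_abs, abs_div, abs_of_nonneg (one_sub_cos_nonneg t), abs_of_pos htp]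
      have h2 : 2 * t ^ (-(r + 1)) = 2 / t ^ (r + 1) := by
        rw [Real.rpow_neg ht0.le]; ring
      rw [h2]
      gcongr
      exact one_sub_cos_le_two t

lemma integrableOn_J (r : ℝ) (hr0 : 0 < r) (hr2 : r < 2) :
    IntegrableOn (fun u : ℝ => u ^ (r - 1) / (1 + u ^ 2)) (Ioi 0) := by
  have hmeas : ∀ s : Set ℝ,
      AEStronglyMeasurable (fun u : ℝ => u ^ (r - 1) / (1 + u ^ 2)) (volume.restrict s) :=
    fun s => ((measurable_id.pow_const (r - 1)).div
      (measurable_const.add (measurable_id.pow_const 2))).aestronglyMeasurable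
  rw [← Ioc_union_Ioi_eq_Ioi (zero_le_one' ℝ)]
  refine IntegrableOn.union ?_ ?_
  · refine Integrable.mono' (g := fun u : ℝ => u ^ (r - 1)) ?_ (hmeas _) ?_
    · have : IntegrableOn (fun u : ℝ => u ^ (r - 1)) (Ioc (0:ℝ) 1) := by
        rw [integrableOn_Ioc_iff_integrableOn_Ioo]
        exact (intervalIntegral.integrableOn_Ioo_rpow_iff one_pos).mpr (by linarith)
      exact this
    · refine (ae_restrict_iff' measurableSet_Ioc).mpr (ae_of_all _ fun u hu => ?_)
      obtain ⟨hu0, hu1⟩ := hu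
      show ‖u ^ (r - 1) / (1 + u ^ 2)‖ ≤ u ^ (r - 1)
      have hup : (0:ℝ) < u ^ (r - 1) := Real.rpow_pos_of_pos hu0 _
      have hd : (0:ℝ) < 1 + u ^ 2 := by positivity
      rw [Real.norm_eq_abs, abs_div, abs_of_pos hup, abs_of_pos hd]
      exact div_le_self hup.le (by nlinarith)
  · refine Integrable.mono' (g := fun u : ℝ => u ^ (r - 3)) ?_ (hmeas _) ?_
    · exact integrableOn_Ioi_rpow_of_lt (by linarith) one_pos
    · refine (ae_restrict_iff' measurableSet_Ioi).mpr (ae_of_all _ fun u hu => ?_)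
      have hu0 : (0:ℝ) < u := lt_trans one_pos hu
      have hup : (0:ℝ) < u ^ (r - 1) := Real.rpow_pos_of_pos hu0 _
      have hd : (0:ℝ) < 1 + u ^ 2 := by positivity
      show ‖u ^ (r - 1) / (1 + u ^ 2)‖ ≤ u ^ (r - 3)
      rw [Real.norm_eq_abs, abs_div, abs_of_pos hup, abs_of_pos hd]
      have h3 : u ^ (r - 3) = u ^ (r - 1) / u ^ 2 := by
        rw [show r - 3 = (r - 1) - ((2:ℕ):ℝ) by push_cast; ring, Real.rpow_sub hu0,
          Real.rpow_natCast]
      rw [h3, div_le_div_iff₀ hd (by positivity : (0:ℝ) < u ^ 2)]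
      nlinarith [hup.le]

lemma integral_one_sub_cos_exp {u : ℝ} (hu : 0 < u) :
    ∫ t in Ioi (0:ℝ), (1 - Real.cos t) * Real.exp (-(u * t)) = 1 / u - u / (u ^ 2 + 1) := by
  have hu2 : (0:ℝ) < u ^ 2 + 1 := by positivity
  have hE : ∀ t : ℝ, HasDerivAt (fun s : ℝ => Real.exp (-(u * s))) (-u * Real.exp (-(u * t))) t := by
    intro t
    have h1 : HasDerivAt (fun s : ℝ => -(u * s)) (-u) t := by
      exact (((hasDerivAt_id t).const_mul u).neg).congr_deriv (by ring)
    simpa [mul_comm] using h1.exp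
  have hderiv : ∀ t ∈ Ioi (0:ℝ),
      HasDerivAt (fun s : ℝ => -Real.exp (-(u * s)) / u
        + Real.exp (-(u * s)) * (u * Real.cos s - Real.sin s) / (u ^ 2 + 1))
        ((1 - Real.cos t) * Real.exp (-(u * t))) t := by
    intro t _
    have h1 := ((hE t).neg).div_const u
    have h2 : HasDerivAt (fun s : ℝ => u * Real.cos s - Real.sin s)
        (u * (-Real.sin t) - Real.cos t) t :=
      ((Real.hasDerivAt_cos t).const_mul u).sub (Real.hasDerivAt_sin t)
    have h3 := ((hE t).mul h2).div_const (u ^ 2 + 1)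
    have h4 := h1.add h3
    refine h4.congr_deriv ?_
    field_simp
    ring
  have hcont : ContinuousWithinAt (fun s : ℝ => -Real.exp (-(u * s)) / u
      + Real.exp (-(u * s)) * (u * Real.cos s - Real.sin s) / (u ^ 2 + 1)) (Ici 0) 0 := by
    have hce : Continuous fun s : ℝ => Real.exp (-(u * s)) :=
      Real.continuous_exp.comp ((continuous_const.mul continuous_id).neg)
    exact (((hce.neg.div_const u).add ((hce.mul
      ((continuous_const.mul Real.continuous_cos).sub Real.continuous_sin)).div_const
        (u ^ 2 + 1)))).continuousWithinAt
  have hint : IntegrableOn (fun t : ℝ => (1 - Real.cos t) * Real.exp (-(u * t))) (Ioi 0) := by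
    refine Integrable.mono' (g := fun t : ℝ => 2 * Real.exp (-(u * t))) ?_ ?_ ?_
    · refine ((exp_neg_integrableOn_Ioi 0 hu).congr_fun (fun t _ => ?_) measurableSet_Ioi).const_mul 2
      rw [neg_mul]
    · exact ((measurable_const.sub Real.measurable_cos).mul
        (Real.measurable_exp.comp ((measurable_const.mul measurable_id).neg))).aestronglyMeasurable
    · refine ae_of_all _ fun t => ?_
      have he : (0:ℝ) < Real.exp (-(u * t)) := Real.exp_pos _
      rw [Real.norm_eq_abs, abs_mul, abs_of_nonneg (one_sub_cos_nonneg t), abs_of_pos he]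
      exact mul_le_mul_of_nonneg_right (one_sub_cos_le_two t) he.le
  have htend : Tendsto (fun s : ℝ => -Real.exp (-(u * s)) / u
      + Real.exp (-(u * s)) * (u * Real.cos s - Real.sin s) / (u ^ 2 + 1)) atTop (nhds 0) := by
    have h1 : Tendsto (fun t : ℝ => u * t) atTop atTop := tendsto_id.const_mul_atTop hu
    have h2 : Tendsto (fun t : ℝ => Real.exp (-(u * t))) atTop (nhds 0) := by
      have := Real.tendsto_exp_neg_atTop_nhds_zero.comp h1
      simpa [Function.comp_def] using this
    have hM : Tendsto (fun t : ℝ => (1 / u + (u + 1) / (u ^ 2 + 1)) * Real.exp (-(u * t)))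
        atTop (nhds 0) := by
      simpa using h2.const_mul (1 / u + (u + 1) / (u ^ 2 + 1))
    refine squeeze_zero_norm (fun t => ?_) hM
    have he : (0:ℝ) < Real.exp (-(u * t)) := Real.exp_pos _
    have h3 : |u * Real.cos t - Real.sin t| ≤ u + 1 := by
      have h4 := abs_sub (u * Real.cos t) (Real.sin t)
      rw [abs_mul, abs_of_pos hu] at h4
      have h5 := Real.abs_cos_le_one t
      have h6 := Real.abs_sin_le_one t
      nlinarith
    rw [Real.norm_eq_abs]
    calc |(-Real.exp (-(u * t)) / u
        + Real.exp (-(u * t)) * (u * Real.cos t - Real.sin t) / (u ^ 2 + 1))|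
        ≤ |(-Real.exp (-(u * t))) / u|
          + |Real.exp (-(u * t)) * (u * Real.cos t - Real.sin t) / (u ^ 2 + 1)| := abs_add_le _ _
      _ ≤ Real.exp (-(u * t)) / u + Real.exp (-(u * t)) * (u + 1) / (u ^ 2 + 1) := by
          rw [abs_div, abs_neg, abs_of_pos he, abs_of_pos hu, abs_div, abs_mul, abs_of_pos he,
            abs_of_pos hu2]
          gcongr
      _ = (1 / u + (u + 1) / (u ^ 2 + 1)) * Real.exp (-(u * t)) := by ring
  have := MeasureTheory.integral_Ioi_of_hasDerivAt_of_tendsto hcont hderiv hint htend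
  rw [this]
  simp [Real.exp_zero]
  ring

lemma integral_exp_neg_mul {c : ℝ} (hc : 0 < c) :
    ∫ v in Ioi (0:ℝ), Real.exp (-(c * v)) = 1 / c := by
  have h := Real.integral_rpow_mul_exp_neg_mul_Ioi (a := 1) one_pos hc
  rw [Real.rpow_one, Real.Gamma_one, mul_one] at h
  rw [← h]
  refine setIntegral_congr_fun measurableSet_Ioi fun t _ => ?_
  rw [sub_self, Real.rpow_zero, one_mul]

lemma integral_rpow_exp_sq {r v : ℝ} (hr0 : 0 < r) (hv : 0 < v) :
    ∫ u in Ioi (0:ℝ), u ^ (r - 1) * Real.exp (-(v * u ^ 2))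
      = 1 / 2 * ((1 / v) ^ (r / 2) * Real.Gamma (r / 2)) := by
  have h := integral_comp_rpow_Ioi
    (fun y : ℝ => (1 / 2 : ℝ) * (y ^ (r / 2 - 1) * Real.exp (-(v * y)))) (p := 2) two_ne_zero
  simp only [smul_eq_mul] at h
  have h2 : ∫ y in Ioi (0:ℝ), (1 / 2 : ℝ) * (y ^ (r / 2 - 1) * Real.exp (-(v * y)))
      = 1 / 2 * ((1 / v) ^ (r / 2) * Real.Gamma (r / 2)) := by
    rw [integral_const_mul, Real.integral_rpow_mul_exp_neg_mul_Ioi (by positivity) hv]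
  rw [← h2, ← h]
  refine setIntegral_congr_fun measurableSet_Ioi fun u hu => ?_
  have hu0 : (0:ℝ) < u := hu
  have e1 : u ^ (2:ℝ) = u ^ 2 := by
    rw [show (2:ℝ) = ((2:ℕ):ℝ) by norm_num, Real.rpow_natCast]
  have e2 : (u ^ (2:ℝ)) ^ (r / 2 - 1) = u ^ (r - 2) := by
    rw [← Real.rpow_mul hu0.le, show (2:ℝ) * (r / 2 - 1) = r - 2 by ring]
  have e3 : u ^ (r - 1) = u * u ^ (r - 2) := by
    rw [show r - 1 = 1 + (r - 2) by ring, Real.rpow_add hu0, Real.rpow_one]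
  show u ^ (r - 1) * Real.exp (-(v * u ^ 2))
      = |(2:ℝ)| * u ^ ((2:ℝ) - 1) * (1 / 2 * ((u ^ (2:ℝ)) ^ (r / 2 - 1) * Real.exp (-(v * u ^ (2:ℝ)))))
  rw [e2, e1, e3]
  rw [show (2:ℝ) - 1 = 1 by norm_num, Real.rpow_one]
  rw [show |(2:ℝ)| = 2 by norm_num]
  ring

lemma inner1 {r t : ℝ} (hr0 : 0 < r) (ht : 0 < t) :
    ∫ u in Ioi (0:ℝ), u ^ r * Real.exp (-(t * u)) = (1 / t) ^ (r + 1) * Real.Gamma (r + 1) := by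
  have h := Real.integral_rpow_mul_exp_neg_mul_Ioi (show (0:ℝ) < r + 1 by linarith) ht
  rw [← h]
  refine setIntegral_congr_fun measurableSet_Ioi fun u _ => ?_
  rw [show r + 1 - 1 = r by ring]

set_option maxHeartbeats 1000000 in
lemma fubini1 (r : ℝ) (hr0 : 0 < r) (hr2 : r < 2) :
    Real.Gamma (r + 1) * ∫ t in Ioi (0:ℝ), (1 - Real.cos t) / t ^ (r + 1)
      = ∫ u in Ioi (0:ℝ), u ^ (r - 1) / (1 + u ^ 2) := by
  have hΓ : 0 < Real.Gamma (r + 1) := Real.Gamma_pos_of_pos (by linarith)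
  have hmeas : AEStronglyMeasurable
      (Function.uncurry fun t u : ℝ => (1 - Real.cos t) * (u ^ r * Real.exp (-(t * u))))
      ((volume.restrict (Ioi 0)).prod (volume.restrict (Ioi 0))) := by
    refine Measurable.aestronglyMeasurable ?_
    exact ((measurable_const.sub (Real.measurable_cos.comp measurable_fst))).mul
      ((measurable_snd.pow_const r).mul
        (Real.measurable_exp.comp (measurable_fst.mul measurable_snd).neg))
  have h_norm : ∀ t : ℝ, 0 < t →
      (∫ u in Ioi (0:ℝ), ‖(1 - Real.cos t) * (u ^ r * Real.exp (-(t * u)))‖)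
        = Real.Gamma (r + 1) * ((1 - Real.cos t) / t ^ (r + 1)) := by
    intro t ht
    have e1 : ∫ u in Ioi (0:ℝ), ‖(1 - Real.cos t) * (u ^ r * Real.exp (-(t * u)))‖
        = ∫ u in Ioi (0:ℝ), (1 - Real.cos t) * (u ^ r * Real.exp (-(t * u))) := by
      refine setIntegral_congr_fun measurableSet_Ioi fun u hu => ?_
      have hu0 : (0:ℝ) < u := hu
      rw [Real.norm_eq_abs, abs_of_nonneg]
      exact mul_nonneg (one_sub_cos_nonneg t) (by positivity)
    rw [e1, integral_const_mul, inner1 hr0 ht, one_div, Real.inv_rpow ht.le]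
    field_simp
  have h_unc : Integrable
      (Function.uncurry fun t u : ℝ => (1 - Real.cos t) * (u ^ r * Real.exp (-(t * u))))
      ((volume.restrict (Ioi 0)).prod (volume.restrict (Ioi 0))) := by
    refine (integrable_prod_iff hmeas).mpr ⟨?_, ?_⟩
    · refine (ae_restrict_iff' measurableSet_Ioi).mpr (ae_of_all _ fun t ht => ?_)
      simp only [Function.uncurry_apply_pair]
      refine Integrable.const_mul ?_ _
      refine (integrableOn_rpow_mul_exp_neg_mul_rpow (p := 1)
        (show (-1:ℝ) < r by linarith) one_pos ht).congr_fun (fun u hu => ?_) measurableSet_Ioi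
      simp only [Real.rpow_one]
      ring_nf
    · refine Integrable.congr ((integrableOn_aux r hr0 hr2).const_mul (Real.Gamma (r + 1))) ?_
      refine (ae_restrict_iff' measurableSet_Ioi).mpr (ae_of_all _ fun t ht => ?_)
      simp only [Function.uncurry_apply_pair]
      exact (h_norm t ht).symm
  calc Real.Gamma (r + 1) * ∫ t in Ioi (0:ℝ), (1 - Real.cos t) / t ^ (r + 1)
      = ∫ t in Ioi (0:ℝ), Real.Gamma (r + 1) * ((1 - Real.cos t) / t ^ (r + 1)) := by
        rw [integral_const_mul]
    _ = ∫ t in Ioi (0:ℝ), ∫ u in Ioi (0:ℝ),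
          (1 - Real.cos t) * (u ^ r * Real.exp (-(t * u))) := by
        refine setIntegral_congr_fun measurableSet_Ioi fun t ht => ?_
        rw [integral_const_mul, inner1 hr0 ht, one_div, Real.inv_rpow (le_of_lt ht)]
        have htp : (0:ℝ) < t ^ (r + 1) := Real.rpow_pos_of_pos ht _
        field_simp
    _ = ∫ u in Ioi (0:ℝ), ∫ t in Ioi (0:ℝ),
          (1 - Real.cos t) * (u ^ r * Real.exp (-(t * u))) := integral_integral_swap h_unc
    _ = ∫ u in Ioi (0:ℝ), u ^ (r - 1) / (1 + u ^ 2) := by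
        refine setIntegral_congr_fun measurableSet_Ioi fun u hu => ?_
        have hu0 : (0:ℝ) < u := hu
        have e1 : ∫ t in Ioi (0:ℝ), (1 - Real.cos t) * (u ^ r * Real.exp (-(t * u)))
            = u ^ r * ∫ t in Ioi (0:ℝ), (1 - Real.cos t) * Real.exp (-(u * t)) := by
          rw [← integral_const_mul]
          refine setIntegral_congr_fun measurableSet_Ioi fun t _ => ?_
          rw [mul_comm t u]
          ring
        rw [e1, integral_one_sub_cos_exp hu0]
        have hur : u ^ r = u ^ (r - 1) * u := by
          have h9 := Real.rpow_add_one hu0.ne' (r - 1)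
          rwa [show r - 1 + 1 = r by ring] at h9
        rw [hur]
        have h1 : (0:ℝ) < u ^ 2 + 1 := by positivity
        field_simp
        ring

set_option maxHeartbeats 1000000 in
lemma fubini2 (r : ℝ) (hr0 : 0 < r) (hr2 : r < 2) :
    ∫ u in Ioi (0:ℝ), u ^ (r - 1) / (1 + u ^ 2)
      = Real.Gamma (r / 2) * Real.Gamma (1 - r / 2) / 2 := by
  have hmeas : AEStronglyMeasurable
      (Function.uncurry fun u v : ℝ => u ^ (r - 1) * Real.exp (-((1 + u ^ 2) * v)))
      ((volume.restrict (Ioi 0)).prod (volume.restrict (Ioi 0))) := by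
    refine Measurable.aestronglyMeasurable ?_
    exact (measurable_fst.pow_const (r - 1)).mul
      (Real.measurable_exp.comp
        (((measurable_const.add (measurable_fst.pow_const 2)).mul measurable_snd).neg))
  have h_norm : ∀ u : ℝ, 0 < u →
      (∫ v in Ioi (0:ℝ), ‖u ^ (r - 1) * Real.exp (-((1 + u ^ 2) * v))‖)
        = u ^ (r - 1) / (1 + u ^ 2) := by
    intro u hu
    have hd : (0:ℝ) < 1 + u ^ 2 := by positivity
    have e1 : ∫ v in Ioi (0:ℝ), ‖u ^ (r - 1) * Real.exp (-((1 + u ^ 2) * v))‖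
        = ∫ v in Ioi (0:ℝ), u ^ (r - 1) * Real.exp (-((1 + u ^ 2) * v)) := by
      refine setIntegral_congr_fun measurableSet_Ioi fun v _ => ?_
      rw [Real.norm_eq_abs, abs_of_nonneg (by positivity)]
    rw [e1, integral_const_mul, integral_exp_neg_mul hd, mul_one_div]
  have h_unc : Integrable
      (Function.uncurry fun u v : ℝ => u ^ (r - 1) * Real.exp (-((1 + u ^ 2) * v)))
      ((volume.restrict (Ioi 0)).prod (volume.restrict (Ioi 0))) := by
    refine (integrable_prod_iff hmeas).mpr ⟨?_, ?_⟩
    · refine (ae_restrict_iff' measurableSet_Ioi).mpr (ae_of_all _ fun u hu => ?_)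
      simp only [Function.uncurry_apply_pair]
      have hd : (0:ℝ) < 1 + u ^ 2 := by positivity
      refine Integrable.const_mul ?_ _
      refine (exp_neg_integrableOn_Ioi 0 hd).congr_fun (fun v _ => ?_) measurableSet_Ioi
      simp only [neg_mul]
    · refine Integrable.congr (integrableOn_J r hr0 hr2) ?_
      refine (ae_restrict_iff' measurableSet_Ioi).mpr (ae_of_all _ fun u hu => ?_)
      simp only [Function.uncurry_apply_pair]
      exact (h_norm u hu).symm
  calc ∫ u in Ioi (0:ℝ), u ^ (r - 1) / (1 + u ^ 2)
      = ∫ u in Ioi (0:ℝ), ∫ v in Ioi (0:ℝ),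
          u ^ (r - 1) * Real.exp (-((1 + u ^ 2) * v)) := by
        refine setIntegral_congr_fun measurableSet_Ioi fun u hu => ?_
        have hd : (0:ℝ) < 1 + u ^ 2 := by positivity
        rw [integral_const_mul, integral_exp_neg_mul hd, mul_one_div]
    _ = ∫ v in Ioi (0:ℝ), ∫ u in Ioi (0:ℝ),
          u ^ (r - 1) * Real.exp (-((1 + u ^ 2) * v)) := integral_integral_swap h_unc
    _ = ∫ v in Ioi (0:ℝ), Real.Gamma (r / 2) / 2 * (v ^ ((1 - r / 2) - 1) * Real.exp (-(1 * v))) := by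
        refine setIntegral_congr_fun measurableSet_Ioi fun v hv => ?_
        have hv0 : (0:ℝ) < v := hv
        have e1 : ∫ u in Ioi (0:ℝ), u ^ (r - 1) * Real.exp (-((1 + u ^ 2) * v))
            = Real.exp (-v) * ∫ u in Ioi (0:ℝ), u ^ (r - 1) * Real.exp (-(v * u ^ 2)) := by
          rw [← integral_const_mul]
          refine setIntegral_congr_fun measurableSet_Ioi fun u _ => ?_
          rw [show -((1 + u ^ 2) * v) = -v + -(v * u ^ 2) by ring, Real.exp_add]
          ring
        rw [e1, integral_rpow_exp_sq hr0 hv0]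
        have e2 : (1 / v) ^ (r / 2) = v ^ ((1 - r / 2) - 1) * v ^ (0:ℝ) := by
          rw [Real.rpow_zero, mul_one, one_div, Real.inv_rpow hv0.le, ← Real.rpow_neg hv0.le,
            show -(r / 2) = (1 - r / 2) - 1 by ring]
        rw [e2, Real.rpow_zero, mul_one, show -(1 * v) = -v by ring]
        ring
    _ = Real.Gamma (r / 2) * Real.Gamma (1 - r / 2) / 2 := by
        rw [integral_const_mul, Real.integral_rpow_mul_exp_neg_mul_Ioi (by linarith) one_pos]
        rw [show (1:ℝ) / 1 = 1 by norm_num, Real.one_rpow, one_mul]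
        ring

set_option maxHeartbeats 1000000 in
lemma const_eval (r : ℝ) (hr0 : 0 < r) (hr2 : r < 2) (hr1 : r ≠ 1) :
    1 / Real.Gamma (r + 1) * (Real.Gamma (r / 2) * Real.Gamma (1 - r / 2) / 2)
      = Real.Gamma (2 - r) / (r * (1 - r)) * Real.sin ((1 - r) * π / 2) := by
  have hπ := Real.pi_pos
  have hs : 0 < Real.sin (π * (r / 2)) := by
    apply Real.sin_pos_of_pos_of_lt_pi (by positivity)
    nlinarith
  have hc : Real.cos (π * (r / 2)) ≠ 0 := by
    intro h
    rw [Real.cos_eq_zero_iff] at h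
    obtain ⟨n, hn⟩ := h
    have h2 : π * (r / 2) = π * ((2 * (n:ℝ) + 1) / 2) := by rw [hn]; ring
    have h3 : r / 2 = (2 * (n:ℝ) + 1) / 2 := mul_left_cancel₀ Real.pi_ne_zero h2
    have hr' : r = 2 * (n:ℝ) + 1 := by linarith
    have l1 : (-1:ℝ) < (n:ℝ) := by linarith
    have l2 : (n:ℝ) < 1 := by linarith
    have l1' : (-1:ℤ) < n := by exact_mod_cast l1
    have l2' : n < (1:ℤ) := by exact_mod_cast l2
    have hn0 : n = 0 := by omega
    rw [hn0] at hr'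
    simp at hr'
    exact hr1 hr'
  have h1 : Real.Gamma (r + 1) = r * Real.Gamma r := Real.Gamma_add_one hr0.ne'
  have h2 : Real.Gamma (2 - r) = (1 - r) * Real.Gamma (1 - r) := by
    rw [show (2:ℝ) - r = (1 - r) + 1 by ring,
      Real.Gamma_add_one (sub_ne_zero.mpr (Ne.symm hr1))]
  have h3 : Real.Gamma (r / 2) * Real.Gamma (1 - r / 2) = π / Real.sin (π * (r / 2)) :=
    Real.Gamma_mul_Gamma_one_sub (r / 2)
  have h4 : Real.Gamma r * Real.Gamma (1 - r) = π / Real.sin (π * r) :=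
    Real.Gamma_mul_Gamma_one_sub r
  have h5 : Real.sin (π * r) = 2 * Real.sin (π * (r / 2)) * Real.cos (π * (r / 2)) := by
    rw [show π * r = 2 * (π * (r / 2)) by ring, Real.sin_two_mul]
  have h6 : Real.sin ((1 - r) * π / 2) = Real.cos (π * (r / 2)) := by
    rw [show (1 - r) * π / 2 = π / 2 - π * (r / 2) by ring, Real.sin_pi_div_two_sub]
  have hG : 0 < Real.Gamma r := Real.Gamma_pos_of_pos hr0
  have hsr : Real.sin (π * r) ≠ 0 := by
    rw [h5]
    exact mul_ne_zero (by positivity) hc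
  have hΓ1r : Real.Gamma (1 - r) = π / (Real.sin (π * r) * Real.Gamma r) := by
    rw [eq_div_iff (mul_ne_zero hsr hG.ne')]
    calc Real.Gamma (1 - r) * (Real.sin (π * r) * Real.Gamma r)
        = Real.Gamma r * Real.Gamma (1 - r) * Real.sin (π * r) := by ring
      _ = π / Real.sin (π * r) * Real.sin (π * r) := by rw [h4]
      _ = π := div_mul_cancel₀ _ hsr
  have hr1' : (1:ℝ) - r ≠ 0 := sub_ne_zero.mpr (Ne.symm hr1)
  rw [h1, h2, h3, h6]
  have e1 : (1 - r) * Real.Gamma (1 - r) / (r * (1 - r)) = Real.Gamma (1 - r) / r := by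
    rw [mul_comm r (1 - r), mul_div_mul_left _ _ hr1']
  rw [e1, hΓ1r, h5]
  have eA : 1 / (r * Real.Gamma r) * (π / Real.sin (π * (r / 2)) / 2)
      = π / (2 * Real.sin (π * (r / 2)) * Real.Gamma r * r) := by ring
  have eB : π / (2 * Real.sin (π * (r / 2)) * Real.cos (π * (r / 2)) * Real.Gamma r) / r
        * Real.cos (π * (r / 2))
      = π * Real.cos (π * (r / 2))
        / (2 * Real.sin (π * (r / 2)) * Real.Gamma r * r * Real.cos (π * (r / 2))) := by ring
  have eC : π * Real.cos (π * (r / 2))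
        / (2 * Real.sin (π * (r / 2)) * Real.Gamma r * r * Real.cos (π * (r / 2)))
      = π / (2 * Real.sin (π * (r / 2)) * Real.Gamma r * r) :=
    mul_div_mul_right _ _ hc
  rw [eA, eB, eC]

end LevyRep

set_option maxHeartbeats 1000000 in
theorem levy_representation (r : ℝ) (hr0 : 0 < r) (hr2 : r < 2) (hr1 : r ≠ 1) (x : ℝ) :
    |x| ^ r =
      (1 / ((Real.Gamma (2 - r) / (r * (1 - r))) * Real.sin ((1 - r) * Real.pi / 2))) *
        ∫ t : ℝ, Real.sin (x * t / 2) ^ 2 / |t| ^ (r + 1) := by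
  have hΓpos : 0 < Real.Gamma (r + 1) := Real.Gamma_pos_of_pos (by linarith)
  set C₀ : ℝ := ∫ t in Ioi (0:ℝ), (1 - Real.cos t) / t ^ (r + 1) with hC₀def
  have hC₀ : C₀ = Real.Gamma (r / 2) * Real.Gamma (1 - r / 2) / 2 / Real.Gamma (r + 1) := by
    have h := LevyRep.fubini1 r hr0 hr2
    rw [LevyRep.fubini2 r hr0 hr2] at h
    rw [eq_div_iff hΓpos.ne']
    linarith
  have hC₀pos : 0 < C₀ := by
    rw [hC₀]
    have g1 : 0 < Real.Gamma (r / 2) := Real.Gamma_pos_of_pos (by positivity)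
    have g2 : 0 < Real.Gamma (1 - r / 2) := Real.Gamma_pos_of_pos (by linarith)
    positivity
  have hK : Real.Gamma (2 - r) / (r * (1 - r)) * Real.sin ((1 - r) * π / 2) = C₀ := by
    rw [hC₀, ← LevyRep.const_eval r hr0 hr2 hr1]
    ring
  have key : ∀ y : ℝ, 0 < y →
      (∫ t : ℝ, Real.sin (y * t / 2) ^ 2 / |t| ^ (r + 1)) = y ^ r * C₀ := by
    intro y hy
    have h1 : (∫ t : ℝ, Real.sin (y * t / 2) ^ 2 / |t| ^ (r + 1))
        = 2 * ∫ t in Ioi (0:ℝ), Real.sin (y * t / 2) ^ 2 / t ^ (r + 1) := by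
      rw [← integral_comp_abs (f := fun s => Real.sin (y * s / 2) ^ 2 / s ^ (r + 1))]
      refine integral_congr_ae (Eventually.of_forall fun t => ?_)
      show Real.sin (y * t / 2) ^ 2 / |t| ^ (r + 1)
          = Real.sin (y * |t| / 2) ^ 2 / |t| ^ (r + 1)
      rcases abs_choice t with h | h
      · rw [h]
      · rw [h, show y * -t / 2 = -(y * t / 2) by ring, Real.sin_neg, neg_sq]
    have h2 : (2:ℝ) * ∫ t in Ioi (0:ℝ), Real.sin (y * t / 2) ^ 2 / t ^ (r + 1)
        = ∫ t in Ioi (0:ℝ), (1 - Real.cos (y * t)) / t ^ (r + 1) := by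
      rw [← integral_const_mul]
      refine setIntegral_congr_fun measurableSet_Ioi fun t ht => ?_
      rw [LevyRep.one_sub_cos_eq (y * t)]
      ring
    have h3 : (∫ t in Ioi (0:ℝ), (1 - Real.cos (y * t)) / t ^ (r + 1)) = y ^ r * C₀ := by
      have hscale : ∀ t ∈ Ioi (0:ℝ), (1 - Real.cos (y * t)) / t ^ (r + 1)
          = y ^ (r + 1) * ((1 - Real.cos (y * t)) / (y * t) ^ (r + 1)) := by
        intro t ht
        have ht0 : (0:ℝ) < t := ht
        rw [Real.mul_rpow hy.le ht0.le]
        have hy1 : (0:ℝ) < y ^ (r + 1) := Real.rpow_pos_of_pos hy _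
        have ht1 : (0:ℝ) < t ^ (r + 1) := Real.rpow_pos_of_pos ht0 _
        field_simp
      rw [setIntegral_congr_fun measurableSet_Ioi hscale, integral_const_mul]
      have hcomp : (∫ t in Ioi (0:ℝ), (1 - Real.cos (y * t)) / (y * t) ^ (r + 1))
          = y⁻¹ * C₀ := by
        have := MeasureTheory.integral_comp_mul_left_Ioi
          (fun s : ℝ => (1 - Real.cos s) / s ^ (r + 1)) 0 hy
        rw [mul_zero] at this
        rw [this, smul_eq_mul, hC₀def]
      rw [hcomp]
      have : y ^ (r + 1) * y⁻¹ = y ^ r := by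
        rw [Real.rpow_add hy, Real.rpow_one]
        field_simp
      rw [← mul_assoc, this]
    rw [h1, h2, h3]
  rcases eq_or_ne x 0 with hx | hx
  · subst hx
    simp [Real.zero_rpow hr0.ne']
  · have hx' : 0 < |x| := abs_pos.mpr hx
    have hxx : (∫ t : ℝ, Real.sin (x * t / 2) ^ 2 / |t| ^ (r + 1))
        = (∫ t : ℝ, Real.sin (|x| * t / 2) ^ 2 / |t| ^ (r + 1)) := by
      rcases abs_choice x with h | h
      · rw [h]
      · rw [h]
        refine integral_congr_ae (Eventually.of_forall fun t => ?_)
        show Real.sin (x * t / 2) ^ 2 / |t| ^ (r + 1)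
            = Real.sin (-x * t / 2) ^ 2 / |t| ^ (r + 1)
        rw [show -x * t / 2 = -(x * t / 2) by ring, Real.sin_neg, neg_sq]
    rw [hxx, key |x| hx', ← hK]
    have hKne : Real.Gamma (2 - r) / (r * (1 - r)) * Real.sin ((1 - r) * π / 2) ≠ 0 := by
      rw [hK]; exact hC₀pos.ne'
    have hsin : Real.sin ((1 - r) * π / 2) ≠ 0 := fun h => hKne (by rw [h, mul_zero])
    have hΓ2 : Real.Gamma (2 - r) ≠ 0 := (Real.Gamma_pos_of_pos (by linarith)).ne'
    have h1r : (1:ℝ) - r ≠ 0 := sub_ne_zero.mpr (Ne.symm hr1)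
    field_simp
end
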